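/- Let X be a finite set with |X| = ℓ ≥ 2 and ℐ_⊆ = {R ⊆ X × X : dom(R) ⊆ rg(R)}. Then the upper dimension of ℐ_⊆ equals 2^ℓ − ℓ. -/

import Mathlib

open Set

/-- A family of sets is convex if it is closed under set-theoretic betweenness. -/
def IsConvexFam {X : Type*} (𝒜 : Set (Set X)) : Prop :=
  ∀ S ∈ 𝒜, ∀ T ∈ 𝒜, ∀ C : Set X, S ⊆ C → C ⊆ T → C ∈ 𝒜

/-- A family is dominated if its union belongs to it. -/
def IsDominatedFam {X : Type*} (𝒜 : Set (Set X)) : Prop := ⋃₀ 𝒜 ∈ 𝒜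

/-- A family is supported if it is nonempty and its intersection belongs to it. -/
def IsSupportedFam {X : Type*} (𝒜 : Set (Set X)) : Prop := 𝒜.Nonempty ∧ ⋂₀ 𝒜 ∈ 𝒜

/-- A family is an interval if it equals `[A,B] = {C | A ⊆ C ⊆ B}` for some `A ⊆ B`. -/
def IsIntervalFam {X : Type*} (𝒜 : Set (Set X)) : Prop :=
  ∃ A B : Set X, A ⊆ B ∧ 𝒜 = Set.Icc A B

/-- `𝒢` dominates `𝒜` if there are dominated convex families `𝒟 G ⊆ 𝒜` (`G ∈ 𝒢`)
with `⋃ G ∈ 𝒢, 𝒟 G = 𝒜` and `⋃₀ (𝒟 G) = G`. -/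
def DominatesFam {X : Type*} (𝒢 𝒜 : Set (Set X)) : Prop :=
  𝒢 ⊆ 𝒜 ∧ ∃ 𝒟 : Set X → Set (Set X),
    (∀ G ∈ 𝒢, 𝒟 G ⊆ 𝒜 ∧ IsConvexFam (𝒟 G) ∧ IsDominatedFam (𝒟 G) ∧ ⋃₀ (𝒟 G) = G) ∧
    (⋃ G ∈ 𝒢, 𝒟 G) = 𝒜

/-- `𝒦` supports `𝒜` if there are supported convex families `𝒮 K ⊆ 𝒜` (`K ∈ 𝒦`)
with `⋃ K ∈ 𝒦, 𝒮 K = 𝒜` and `⋂₀ (𝒮 K) = K`. -/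
def SupportsFam {X : Type*} (𝒦 𝒜 : Set (Set X)) : Prop :=
  𝒦 ⊆ 𝒜 ∧ ∃ 𝒮 : Set X → Set (Set X),
    (∀ K ∈ 𝒦, 𝒮 K ⊆ 𝒜 ∧ IsConvexFam (𝒮 K) ∧ IsSupportedFam (𝒮 K) ∧ ⋂₀ (𝒮 K) = K) ∧
    (⋃ K ∈ 𝒦, 𝒮 K) = 𝒜

/-- The upper dimension: the minimal cardinality of a dominating subfamily. -/
noncomputable def upperDim {X : Type*} (𝒜 : Set (Set X)) : ℕ∞ :=
  sInf {n : ℕ∞ | ∃ 𝒢 : Set (Set X), DominatesFam 𝒢 𝒜 ∧ 𝒢.encard = n}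

/-- The dual upper dimension: the minimal cardinality of a supporting subfamily. -/
noncomputable def dualDim {X : Type*} (𝒜 : Set (Set X)) : ℕ∞ :=
  sInf {n : ℕ∞ | ∃ 𝒦 : Set (Set X), SupportsFam 𝒦 𝒜 ∧ 𝒦.encard = n}

/-- The cylindrical dimension: the minimal number of intervals whose union is `𝒜`. -/
noncomputable def cylDim {X : Type*} (𝒜 : Set (Set X)) : ℕ∞ :=
  sInf {n : ℕ∞ | ∃ 𝕀 : Set (Set (Set X)),
    (∀ J ∈ 𝕀, IsIntervalFam J) ∧ ⋃₀ 𝕀 = 𝒜 ∧ 𝕀.encard = n}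

open Classical in
noncomputable def chiFun {X : Type*} (A : Set X) (x : X) : Bool := decide (x ∈ A)

/-- The set-theoretic operation corresponding to a binary operation on `{0,1}`. -/
noncomputable def setOp {X : Type*} (op : Bool → Bool → Bool) (A B : Set X) : Set X :=
  {x | op (chiFun A x) (chiFun B x) = true}

/-- The tensor operation on families corresponding to a binary operation on `{0,1}`. -/
noncomputable def tensorFam {X : Type*} (op : Bool → Bool → Bool)
    (𝒜 ℬ : Set (Set X)) : Set (Set X) :=
  Set.image2 (setOp op) 𝒜 ℬ

/-- The convex shadow of `A` in `𝒜`. -/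
def convexShadow {X : Type*} (𝒜 : Set (Set X)) (A : Set X) : Set (Set X) :=
  {B | B ⊆ A ∧ Set.Icc B A ⊆ 𝒜}

/-- Domain of a relation. -/
def relDom {X Y : Type*} (R : Set (X × Y)) : Set X := {x | ∃ y, (x, y) ∈ R}

/-- Range of a relation. -/
def relRg {X Y : Type*} (R : Set (X × Y)) : Set Y := {y | ∃ x, (x, y) ∈ R}

/-- The family of (partial) functions from `X` to `Y`, as sets of pairs. -/
def partialFunFam (X Y : Type*) : Set (Set (X × Y)) :=
  {f | ∀ x y y', (x, y) ∈ f → (x, y') ∈ f → y = y'}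

/-- The family of relations on `X` with disjoint domain and range. -/
def exclFam (X : Type*) : Set (Set (X × X)) :=
  {R | relDom R ∩ relRg R = ∅}

/-- The family of relations on `X` whose domain is included in their range. -/
def inclFam (X : Type*) : Set (Set (X × X)) :=
  {R | relDom R ⊆ relRg R}

/-- The family of anonymous relations: every point of the domain has two distinct images. -/
def anonFam (X Y : Type*) : Set (Set (X × Y)) :=
  {R | ∀ x ∈ relDom R, ∃ y y' : Y, y ≠ y' ∧ (x, y) ∈ R ∧ (x, y') ∈ R}

/-- The family of rectangles `A × B`. -/
def rectFam (X Y : Type*) : Set (Set (X × Y)) :=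
  {P | ∃ (A : Set X) (B : Set Y), P = A ×ˢ B}

/-- General tensor disjunction of an indexed family of families of sets. -/
def gTensorDisj {ι X : Type*} (𝒜 : ι → Set (Set X)) : Set (Set X) :=
  {U | ∃ f : ι → Set X, (∀ i, f i ∈ 𝒜 i) ∧ U = ⋃ i, f i}

/-- The Kripke operator associated to a relation `ℛ ⊆ 𝒫(Y) × 𝒫(X)^n`. -/
def kripkeOp {X Y : Type*} {n : ℕ} (ℛ : Set (Set Y × (Fin n → Set X)))
    (𝒜 : Fin n → Set (Set X)) : Set (Set Y) :=
  {B | ∃ A : Fin n → Set X, (∀ i, A i ∈ 𝒜 i) ∧ (B, A) ∈ ℛ}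

section Aux

open Classical

variable {X : Type*}

/-- The diagonal relation plus `B × univ`. -/
def myGB (B : Set X) : Set (X × X) := (B ×ˢ (Set.univ : Set X)) ∪ {p : X × X | p.1 = p.2}

lemma mem_myGB {B : Set X} {p : X × X} : p ∈ myGB B ↔ p.1 ∈ B ∨ p.1 = p.2 := by
  simp [myGB, Set.mem_prod]

lemma myGB_mem_incl (B : Set X) : myGB B ∈ inclFam X := by
  intro x _
  exact ⟨x, Or.inr rfl⟩

/-- From a dominating family we get, for each member, a "convex shadow" witness. -/
lemma dominates_cover {Y : Type*} {𝒢 𝒜 : Set (Set Y)} (h : DominatesFam 𝒢 𝒜) :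
    ∀ R ∈ 𝒜, ∃ G ∈ 𝒢, R ⊆ G ∧ ∀ S : Set Y, R ⊆ S → S ⊆ G → S ∈ 𝒜 := by
  obtain ⟨hsub, 𝒟, hD, hUnion⟩ := h
  intro R hR
  rw [← hUnion] at hR
  simp only [Set.mem_iUnion] at hR
  obtain ⟨G, hG, hRG⟩ := hR
  obtain ⟨hDA, hconv, hdom, htop⟩ := hD G hG
  have hGmem : G ∈ 𝒟 G := by
    have h' : ⋃₀ 𝒟 G ∈ 𝒟 G := hdom
    rwa [htop] at h'
  refine ⟨G, hG, ?_, ?_⟩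
  · rw [← htop]; exact Set.subset_sUnion_of_mem hRG
  · intro S hRS hSG
    exact hDA (hconv R hRG G hGmem S hRS hSG)

lemma shadow_dominates {Y : Type*} {𝒜 : Set (Set Y)} {G : Set Y} (hG : G ∈ 𝒜) :
    convexShadow 𝒜 G ⊆ 𝒜 ∧ IsConvexFam (convexShadow 𝒜 G) ∧
      IsDominatedFam (convexShadow 𝒜 G) ∧ ⋃₀ (convexShadow 𝒜 G) = G := by
  have hGmem : G ∈ convexShadow 𝒜 G := ⟨subset_rfl, by
    intro C hC
    have : C = G := subset_antisymm hC.2 hC.1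
    rwa [this]⟩
  have hsub : convexShadow 𝒜 G ⊆ 𝒜 := fun B hB => hB.2 ⟨subset_rfl, hB.1⟩
  have htop : ⋃₀ (convexShadow 𝒜 G) = G := by
    apply subset_antisymm
    · exact Set.sUnion_subset fun B hB => hB.1
    · exact Set.subset_sUnion_of_mem hGmem
  refine ⟨hsub, ?_, ?_, htop⟩
  · intro S hS T hT C hSC hCT
    exact ⟨hCT.trans hT.1, fun D hD => hS.2 ⟨hSC.trans hD.1, hD.2⟩⟩
  · unfold IsDominatedFam
    rwa [htop]

/-- The set of non-singleton subsets of `X`. -/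
def nonSingl (X : Type*) : Set (Set X) := {B : Set X | ¬ ∃ b : X, B = {b}}

lemma encard_nonSingl [Fintype X] : (nonSingl X).encard =
    ((2 ^ Fintype.card X - Fintype.card X : ℕ) : ℕ∞) := by
  have hset : nonSingl X = (Set.univ : Set (Set X)) \ Set.range (fun b : X => ({b} : Set X)) := by
    ext B
    simp [nonSingl, Set.range, eq_comm]
  have hrange : (Set.range (fun b : X => ({b} : Set X))).encard = (Fintype.card X : ℕ∞) := by
    rw [← Set.image_univ, Set.InjOn.encard_image (fun a _ b _ h => by
      simpa using h), Set.encard_univ, ENat.card_eq_coe_fintype_card]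
  have huniv : (Set.univ : Set (Set X)).encard = ((2 ^ Fintype.card X : ℕ) : ℕ∞) := by
    rw [Set.encard_univ, ENat.card_eq_coe_fintype_card, Fintype.card_set]
  have key := Set.encard_diff_add_encard_of_subset
    (Set.subset_univ (Set.range (fun b : X => ({b} : Set X))))
  rw [hrange, huniv] at key
  rw [hset]
  have hle : Fintype.card X ≤ 2 ^ Fintype.card X := Nat.lt_two_pow_self.le
  have : (((2 ^ Fintype.card X - Fintype.card X : ℕ) : ℕ∞)) + (Fintype.card X : ℕ∞)
      = ((2 ^ Fintype.card X : ℕ) : ℕ∞) := by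
    rw [← Nat.cast_add, Nat.sub_add_cancel hle]
  rw [← this] at key
  exact WithTop.add_right_cancel (ENat.coe_ne_top _) key

end Aux

theorem stmt14 {X : Type*} [Fintype X] (hX : 2 ≤ Fintype.card X) :
    upperDim (inclFam X) = ((2 ^ Fintype.card X - Fintype.card X : ℕ) : ℕ∞) := by
  classical
  have hnt : Nontrivial X := Fintype.one_lt_card_iff_nontrivial.mp (by omega)
  rw [← encard_nonSingl (X := X)]
  apply le_antisymm
  · -- upper bound: the family of myGB B, B non-singleton, dominates
    apply sInf_le
    refine ⟨myGB '' nonSingl X, ⟨?_, ?_⟩, ?_⟩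
    · rintro _ ⟨B, _, rfl⟩; exact myGB_mem_incl B
    · refine ⟨convexShadow (inclFam X), ?_, ?_⟩
      · rintro _ ⟨B, _, rfl⟩
        exact shadow_dominates (myGB_mem_incl B)
      · apply subset_antisymm
        · apply Set.iUnion₂_subset
          rintro _ ⟨B, _, rfl⟩
          exact (shadow_dominates (myGB_mem_incl B)).1
        · intro R hR
          have hdomrg : relDom R ⊆ relRg R := hR
          by_cases hsing : ∃ b : X, relRg R = {b}
          · obtain ⟨b, hb⟩ := hsing
            refine Set.mem_iUnion₂.mpr ⟨myGB ∅, ⟨∅, by simp [nonSingl, eq_comm, Set.eq_singleton_iff_unique_mem], rfl⟩, ?_, ?_⟩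
            · rintro ⟨x, y⟩ hxy
              have hy : y ∈ relRg R := ⟨x, hxy⟩
              have hx : x ∈ relRg R := hdomrg ⟨y, hxy⟩
              rw [hb] at hy hx
              refine mem_myGB.mpr (Or.inr ?_)
              simp at hx hy
              rw [hx, hy]
            · rintro S ⟨hRS, hSG⟩
              intro x hx
              obtain ⟨y, hxy⟩ := hx
              have := mem_myGB.mp (hSG hxy)
              simp at this
              subst this
              exact ⟨_, hxy⟩
          · refine Set.mem_iUnion₂.mpr ⟨myGB (relRg R), ⟨relRg R, hsing, rfl⟩, ?_, ?_⟩
            · rintro ⟨x, y⟩ hxy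
              exact mem_myGB.mpr (Or.inl (hdomrg ⟨y, hxy⟩))
            · rintro S ⟨hRS, hSG⟩
              intro x hx
              obtain ⟨y, hxy⟩ := hx
              rcases mem_myGB.mp (hSG hxy) with hxB | hxy'
              · obtain ⟨z, hz⟩ := hxB
                exact ⟨z, hRS hz⟩
              · simp only at hxy'
                subst hxy'
                exact ⟨_, hxy⟩
    · -- cardinality of the image
      apply Set.InjOn.encard_image
      have hmono : ∀ B B' : Set X, myGB B ⊆ myGB B' → B ⊆ B' := by
        intro B B' hsub b hb
        obtain ⟨y, hy⟩ := exists_ne b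
        have : (b, y) ∈ myGB B := mem_myGB.mpr (Or.inl hb)
        rcases mem_myGB.mp (hsub this) with h | h
        · exact h
        · exact absurd h.symm hy
      intro B _ B' _ h
      exact subset_antisymm (hmono _ _ h.le) (hmono _ _ h.ge)
  · -- lower bound
    apply le_sInf
    rintro n ⟨𝒢, hdom, rfl⟩
    have key := dominates_cover hdom
    have hmem : ∀ B : Set X, (B ×ˢ B) ∈ inclFam X := by
      rintro B x ⟨y, hy⟩
      rw [Set.mem_prod] at hy
      exact ⟨y, Set.mem_prod.mpr ⟨hy.2, hy.1⟩⟩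
    have h2 : ∀ B : Set X, ∃ G ∈ 𝒢, (B ×ˢ B) ⊆ G ∧
        ∀ S : Set (X × X), (B ×ˢ B) ⊆ S → S ⊆ G → S ∈ inclFam X :=
      fun B => key _ (hmem B)
    choose f hf1 hf2 hf3 using h2
    have hsubΔ : ∀ B : Set X, ∀ p ∈ f B, p.1 ∈ B ∨ p.1 = p.2 := by
      rintro B ⟨x, y⟩ hp
      have hS : ((B ×ˢ B) ∪ {(x, y)}) ∈ inclFam X :=
        hf3 B _ Set.subset_union_left
          (Set.union_subset (hf2 B) (Set.singleton_subset_iff.mpr hp))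
      have hx : x ∈ relDom ((B ×ˢ B) ∪ {(x, y)}) := ⟨y, Or.inr rfl⟩
      obtain ⟨z, hz⟩ := hS hx
      rcases hz with h | h
      · exact Or.inl (Set.mem_prod.mp h).2
      · obtain ⟨h1, h2⟩ := Prod.ext_iff.mp h
        exact Or.inr h2
    have hstep : ∀ B B' : Set X, B ∈ nonSingl X → f B = f B' → B ⊆ B' := by
      intro B B' hB heq b hb
      have hb2 : ∃ b2 ∈ B, b2 ≠ b := by
        by_contra hc
        push_neg at hc
        exact hB ⟨b, Set.eq_singleton_iff_unique_mem.mpr ⟨hb, hc⟩⟩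
      obtain ⟨b2, hb2B, hb2ne⟩ := hb2
      have : (b, b2) ∈ f B' := heq ▸ hf2 B (Set.mem_prod.mpr ⟨hb, hb2B⟩)
      rcases hsubΔ B' _ this with h | h
      · exact h
      · exact absurd h.symm hb2ne
    apply Set.encard_le_encard_of_injOn (f := f)
    · intro B hB
      exact hf1 B
    · intro B hB B' hB' heq
      exact subset_antisymm (hstep B B' hB heq) (hstep B' B hB' heq.symm)
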